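/- Let G be a group given by generators x_1,...,x_r and a_1,...,a_g with relations x_1···x_r·a_1^2···a_g^2 = 1 and x_i^{m_i} = 1. For an odd positive integer d, the number of homomorphisms ψ: G → Z_d with each ψ(x_i) of exact order m_i equals d^{g-1}·∏_{i=1}^r φ(m_i) if every m_i divides d, and 0 otherwise. -/

import Mathlib

/-- The relations `x 1 ⋯ x r * a 1 ^ 2 ⋯ a g ^ 2 = 1` and `x i ^ (m i) = 1` defining
the fundamental group of a closed non-orientable orbifold with `g` crosscaps and
branch indices `m 1, …, m r`. -/
def orbifoldRels (r g : ℕ) (m : Fin r → ℕ) : Set (FreeGroup (Fin r ⊕ Fin g)) :=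
  insert
    ((List.ofFn fun i : Fin r => FreeGroup.of (Sum.inl i)).prod *
      (List.ofFn fun k : Fin g => (FreeGroup.of (Sum.inr k)) ^ 2).prod)
    {w | ∃ i : Fin r, w = FreeGroup.of (Sum.inl i) ^ m i}

/-- Homomorphisms out of a presented group, restricted by a predicate on generator images,
correspond to generator assignments satisfying the relations and the predicate. -/
def auxHomEquiv {α G : Type*} [Group G] (rels : Set (FreeGroup α)) (P : (α → G) → Prop) :
    {ψ : PresentedGroup rels →* G // P (fun x => ψ (PresentedGroup.of x))} ≃
      {f : α → G // (∀ w ∈ rels, FreeGroup.lift f w = 1) ∧ P f} where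
  toFun ψ := ⟨fun x => ψ.1 (PresentedGroup.of x), fun w hw => by
      have h1 : FreeGroup.lift (fun x => ψ.1 (PresentedGroup.of x)) w
          = ψ.1 (PresentedGroup.mk rels w) := by
        have h2 : FreeGroup.lift (fun x => ψ.1 (PresentedGroup.of x))
            = ψ.1.comp (PresentedGroup.mk rels) := by
          ext x
          simp [PresentedGroup.of]
        rw [h2]; rfl
      rw [h1, show PresentedGroup.mk rels w = 1 from
        (QuotientGroup.eq_one_iff w).mpr (Subgroup.subset_normalClosure hw), map_one],
    ψ.2⟩
  invFun f := ⟨PresentedGroup.toGroup f.2.1, by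
    have h : (fun x => PresentedGroup.toGroup f.2.1 (PresentedGroup.of x)) = f.1 :=
      funext fun x => PresentedGroup.toGroup.of f.2.1
    rw [h]; exact f.2.2⟩
  left_inv ψ := by
    apply Subtype.ext
    apply PresentedGroup.ext
    intro x
    simp only []
    rw [PresentedGroup.toGroup.of]
  right_inv f := by
    apply Subtype.ext
    funext x
    simp only []
    rw [PresentedGroup.toGroup.of]

/-- Let `G` be the group generated by `x 1, …, x r, a 1, …, a g` with relations
`x 1 ⋯ x r a 1² ⋯ a g² = 1` and `x i ^ (m i) = 1`.  For an odd positive integer `d`, the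
number of homomorphisms `ψ : G → ZMod d` with each `ψ (x i)` of exact order `m i` equals
`d ^ (g - 1) * ∏ φ (m i)` if every `m i` divides `d`, and `0` otherwise. -/
theorem stmt_7 (d : ℕ) (hd : 0 < d) (hodd : Odd d) (g r : ℕ) (hg : 1 ≤ g)
    (m : Fin r → ℕ) (hm : ∀ i, 1 < m i) :
    Nat.card
      {ψ : PresentedGroup (orbifoldRels r g m) →* Multiplicative (ZMod d) //
        ∀ i : Fin r, orderOf (ψ (PresentedGroup.of (Sum.inl i))) = m i} =
      if ∀ i, m i ∣ d then d ^ (g - 1) * ∏ i, Nat.totient (m i) else 0 := by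
  haveI : NeZero d := ⟨hd.ne'⟩
  set M := Multiplicative (ZMod d) with hMdef
  obtain ⟨n, rfl⟩ : ∃ n, g = n + 1 := ⟨g - 1, (Nat.succ_pred_eq_of_pos hg).symm⟩
  have hcard : Nat.card M = d := by
    simp [hMdef, Nat.card_eq_fintype_card, ZMod.card]
  have hpowd : ∀ x : M, x ^ d = 1 := fun x => by
    have := pow_card_eq_one' (x := x)
    rwa [hcard] at this
  have htwo : 2 ∣ d + 1 := hodd.add_one.two_dvd
  have hsq : ∀ x : M, (x ^ ((d + 1) / 2)) ^ 2 = x := fun x => by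
    rw [← pow_mul, Nat.div_mul_cancel htwo, pow_succ, hpowd, one_mul]
  have hsq' : ∀ x : M, (x ^ 2) ^ ((d + 1) / 2) = x := fun x => by
    rw [← pow_mul, mul_comm, pow_mul, hsq]
  -- Step 1: homs ↔ generator assignments
  have e1 := auxHomEquiv (G := M) (orbifoldRels r (n + 1) m)
    (fun f => ∀ i : Fin r, orderOf (f (Sum.inl i)) = m i)
  -- Step 2: unfold the relations
  have e2 : {f : Fin r ⊕ Fin (n + 1) → M //
        (∀ w ∈ orbifoldRels r (n + 1) m, FreeGroup.lift f w = 1) ∧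
          ∀ i : Fin r, orderOf (f (Sum.inl i)) = m i} ≃
      {p : (Fin r → M) × (Fin (n + 1) → M) //
        (∀ i : Fin r, orderOf (p.1 i) = m i) ∧
          (∏ i, p.1 i) * ∏ k, (p.2 k) ^ 2 = 1} := by
    refine Equiv.subtypeEquiv (Equiv.sumArrowEquivProdArrow _ _ _) fun f => ?_
    have hlift : FreeGroup.lift f
        ((List.ofFn fun i : Fin r => FreeGroup.of (Sum.inl i)).prod *
          (List.ofFn fun k : Fin (n + 1) => (FreeGroup.of (Sum.inr k)) ^ 2).prod) =
        (∏ i, f (Sum.inl i)) * ∏ k, (f (Sum.inr k)) ^ 2 := by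
      simp only [map_mul, map_list_prod, List.map_ofFn, Function.comp_def, map_pow,
        FreeGroup.lift_apply_of, Fin.prod_ofFn]
      exact congrArg₂ (· * ·) (Fin.prod_ofFn _) (Fin.prod_ofFn _)
    constructor
    · rintro ⟨hrels, hord⟩
      refine ⟨fun i => hord i, ?_⟩
      have h := hrels _ (Set.mem_insert _ _)
      rw [hlift] at h
      exact h
    · rintro ⟨hord, hprod⟩
      refine ⟨?_, fun i => hord i⟩
      intro w hw
      rcases hw with rfl | ⟨i, rfl⟩
      · rw [hlift]; exact hprod
      · have h : orderOf (f (Sum.inl i)) = m i := hord i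
        rw [map_pow, FreeGroup.lift_apply_of, ← h, pow_orderOf_eq_one]
  -- Step 3: split off the last handle coordinate
  have e3 : {p : (Fin r → M) × (Fin (n + 1) → M) //
        (∀ i : Fin r, orderOf (p.1 i) = m i) ∧
          (∏ i, p.1 i) * ∏ k, (p.2 k) ^ 2 = 1} ≃
      {u : Fin r → M // ∀ i, orderOf (u i) = m i} × (Fin n → M) := by
    refine
      { toFun := fun p => (⟨p.1.1, p.2.1⟩, Fin.init p.1.2)
        invFun := fun q =>
          ⟨(q.1.1, Fin.snoc q.2
              ((((∏ i, q.1.1 i) * ∏ k, (q.2 k) ^ 2)⁻¹) ^ ((d + 1) / 2))), q.1.2, by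
            rw [Fin.prod_univ_castSucc]
            simp only [Fin.snoc_castSucc, Fin.snoc_last]
            rw [hsq, ← mul_assoc, mul_inv_cancel]⟩
        left_inv := ?_
        right_inv := ?_ }
    · rintro ⟨⟨u, w⟩, hord, hprod⟩
      refine Subtype.ext (Prod.ext_iff.mpr ⟨rfl, ?_⟩)
      show Fin.snoc (Fin.init w)
          ((((∏ i, u i) * ∏ k, (Fin.init w k) ^ 2)⁻¹) ^ ((d + 1) / 2)) = w
      have hprod' : (∏ i, u i) * ∏ k : Fin (n + 1), (w k) ^ 2 = 1 := hprod
      rw [Fin.prod_univ_castSucc (f := fun k => (w k) ^ 2)] at hprod'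
      have h1 : (w (Fin.last n)) ^ 2 * ((∏ i, u i) * ∏ k, (Fin.init w k) ^ 2) = 1 := by
        rw [mul_comm, mul_assoc]
        exact hprod'
      have hlast : (((∏ i, u i) * ∏ k, (Fin.init w k) ^ 2)⁻¹) = (w (Fin.last n)) ^ 2 :=
        (eq_inv_iff_mul_eq_one.mpr h1).symm
      rw [hlast, hsq']
      exact Fin.snoc_init_self w
    · rintro ⟨⟨u, hu⟩, v⟩
      have h2 : Fin.init (α := fun _ : Fin (n + 1) => M) (Fin.snoc v
          ((((∏ i, u i) * ∏ k, (v k) ^ 2)⁻¹) ^ ((d + 1) / 2))) = v :=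
        Fin.init_snoc (α := fun _ : Fin (n + 1) => M) _ v
      exact Prod.ext_iff.mpr ⟨rfl, h2⟩
  -- Step 4: the order conditions split over coordinates
  have e4 : {u : Fin r → M // ∀ i, orderOf (u i) = m i} ≃
      ∀ i : Fin r, {x : M // orderOf x = m i} :=
    Equiv.subtypePiEquivPi (p := fun (i : Fin r) (x : M) => orderOf x = m i)
  -- count elements of given order
  have hcount : ∀ i : Fin r, Nat.card {x : M // orderOf x = m i} =
      if m i ∣ d then Nat.totient (m i) else 0 := by
    intro i
    by_cases hdvd : m i ∣ d
    · rw [if_pos hdvd]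
      classical
      rw [Nat.card_eq_fintype_card, Fintype.card_subtype]
      exact IsCyclic.card_orderOf_eq_totient (by rwa [show Fintype.card M = d by
        simp [hMdef, ZMod.card]])
    · rw [if_neg hdvd]
      have : IsEmpty {x : M // orderOf x = m i} := by
        refine ⟨fun x => hdvd ?_⟩
        have := orderOf_dvd_card (x := x.1)
        rwa [show Fintype.card M = d by simp [hMdef, ZMod.card], x.2] at this
      exact Nat.card_of_isEmpty
  have key := Nat.card_congr ((e1.trans e2).trans e3)
  rw [key, Nat.card_prod, Nat.card_congr e4, Nat.card_pi, Nat.card_fun, hcard,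
    Nat.card_eq_fintype_card (α := Fin n), Fintype.card_fin]
  simp only [hcount]
  by_cases hall : ∀ i, m i ∣ d
  · rw [if_pos hall, Nat.add_sub_cancel]
    rw [Finset.prod_congr rfl fun i _ => if_pos (hall i)]
    ring
  · rw [if_neg hall]
    push_neg at hall
    obtain ⟨i, hi⟩ := hall
    refine mul_eq_zero_of_left ?_ _
    exact Finset.prod_eq_zero (Finset.mem_univ i) (if_neg hi)
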